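/- Consider g_t(z,w) = (z² − 2, w² + t(z+1)(2−z)). There exists t₀ > 0 such that for all real t ≥ t₀: (i) (−1, 0) and (2, 0) are fixed points of g_t; and (ii) for every z ∈ [−2,2] with z ∉ {−1, 2}, the orbit g_tⁿ(z,0) escapes to infinity, i.e. ‖g_tⁿ(z,0)‖ → ∞ as n → ∞. -/

import Mathlib

open Filter

/-- base orbit -/
def jonssonZ (z0 : ℝ) : ℕ → ℝ
  | 0 => z0
  | n+1 => (jonssonZ z0 n) ^ 2 - 2

/-- fiber orbit -/
def jonssonW (t z0 : ℝ) : ℕ → ℝ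
  | 0 => 0
  | n+1 => (jonssonW t z0 n) ^ 2 + t * (jonssonZ z0 n + 1) * (2 - jonssonZ z0 n)

lemma jonssonZ_mem (z0 : ℝ) (h1 : -2 ≤ z0) (h2 : z0 ≤ 2) :
    ∀ n, -2 ≤ jonssonZ z0 n ∧ jonssonZ z0 n ≤ 2 := by
  intro n
  induction n with
  | zero => exact ⟨h1, h2⟩
  | succ n ih =>
    obtain ⟨a, b⟩ := ih
    constructor
    · show -2 ≤ (jonssonZ z0 n) ^ 2 - 2; nlinarith
    · show (jonssonZ z0 n) ^ 2 - 2 ≤ 2; nlinarith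

set_option maxHeartbeats 2000000 in
/-- The key real escape lemma. -/
lemma jonsson_escape (t z0 : ℝ) (ht : 90000 ≤ t) (hz1 : -2 ≤ z0) (hz2 : z0 ≤ 2)
    (hne1 : z0 ≠ -1) (hne2 : z0 ≠ 2) :
    ∃ N : ℕ, ∀ k : ℕ, 3 * Real.sqrt t * 2 ^ k ≤ |jonssonW t z0 (N + k)| := by
  set s := Real.sqrt t with hs_def
  have ht0 : (0:ℝ) ≤ t := by linarith
  have hs2 : s ^ 2 = t := Real.sq_sqrt ht0
  have hs300 : 300 ≤ s := by
    have : Real.sqrt 90000 ≤ s := Real.sqrt_le_sqrt ht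
    rwa [show (90000:ℝ) = 300^2 by norm_num, Real.sqrt_sq (by norm_num)] at this
  have hspos : (0:ℝ) < s := by linarith
  set Z := jonssonZ z0 with hZ
  set W := jonssonW t z0 with hW
  have hZmem : ∀ n, -2 ≤ Z n ∧ Z n ≤ 2 := jonssonZ_mem z0 hz1 hz2
  have hZsucc : ∀ n, Z (n+1) = (Z n) ^ 2 - 2 := fun n => rfl
  have hWsucc : ∀ n, W (n+1) = (W n) ^ 2 + t * (Z n + 1) * (2 - Z n) := fun n => rfl
  -- Step 1: some iterate exceeds 3 s.
  have hbig : ∃ N, 3 * s < |W N| := by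
    by_contra hcon
    push_neg at hcon
    set ε := 3 / s with hε_def
    have hε0 : 0 < ε := by positivity
    have hε : ε ≤ 1/100 := by
      rw [hε_def, div_le_iff₀ hspos]; linarith
    -- c n ≤ ε for all n
    have hc : ∀ n, (Z n + 1) * (2 - Z n) ≤ ε := by
      intro n
      have h1 : W (n+1) ≤ 3 * s := (abs_le.mp (hcon (n+1))).2
      have h2 : t * ((Z n + 1) * (2 - Z n)) ≤ 3 * s := by
        have := hWsucc n
        nlinarith [sq_nonneg (W n)]
      rw [le_div_iff₀ hspos]
      nlinarith
    -- coarse region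
    have hreg1 : ∀ n, Z n ≤ -1 + ε ∨ 2 - ε ≤ Z n := by
      intro n
      by_contra hcon2
      push_neg at hcon2
      obtain ⟨ha, hb⟩ := hcon2
      have hcn := hc n
      rcases le_total (Z n) (1/2) with h | h
      · nlinarith
      · nlinarith
    -- refined region
    have hreg2 : ∀ n, Z n ≤ -2 + ε ∨ |Z n + 1| ≤ ε ∨ 2 - ε ≤ Z n := by
      intro n
      rcases hreg1 n with h | h
      · rcases hreg1 (n+1) with h' | h'
        · rw [hZsucc n] at h'
          right; left
          rw [abs_le]
          constructor
          · nlinarith [hZmem n]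
          · linarith
        · rw [hZsucc n] at h'
          left
          nlinarith [(hZmem n).1]
      · right; right; exact h
    -- near 2: must be exactly 2
    have hB2 : ∀ m, 2 - ε ≤ Z m → Z m ≠ 2 → False := by
      intro m hm hm2
      have hmlt : Z m < 2 := lt_of_le_of_ne (hZmem m).2 hm2
      have hpos : 0 < 2 - Z m := by linarith
      have grow : ∀ k, 2 - ε ≤ Z (m+k) ∧ 3 ^ k * (2 - Z m) ≤ 2 - Z (m+k) := by
        intro k
        induction k with
        | zero => simpa using hm
        | succ k ih =>
          show 2 - ε ≤ Z (m+k+1) ∧ 3 ^ (k+1) * (2 - Z m) ≤ 2 - Z (m+k+1)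
          obtain ⟨ha, hb⟩ := ih
          have hle2 := (hZmem (m+k)).2
          have hstep : 2 - Z (m+k+1) = (2 - Z (m+k)) * (2 + Z (m+k)) := by
            rw [hZsucc (m+k)]; ring
          have hup : 2 - Z (m+k+1) ≤ 4 * ε := by
            rw [hstep]; nlinarith
          have hin : 2 - ε ≤ Z (m+k+1) := by
            rcases hreg2 (m+k+1) with h' | h' | h'
            · linarith
            · have := (abs_le.mp h').2; linarith
            · exact h'
          refine ⟨hin, ?_⟩
          show 3 ^ (k+1) * (2 - Z m) ≤ 2 - Z (m+k+1)
          rw [hstep]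
          have h3 : (3:ℝ) ≤ 2 + Z (m+k) := by linarith
          calc 3 ^ (k+1) * (2 - Z m) = 3 * (3 ^ k * (2 - Z m)) := by ring
            _ ≤ 3 * (2 - Z (m+k)) := by nlinarith
            _ ≤ (2 - Z (m+k)) * (2 + Z (m+k)) := by nlinarith
      obtain ⟨k, hk⟩ := pow_unbounded_of_one_lt (ε / (2 - Z m)) (by norm_num : (1:ℝ) < 3)
      have h1 : ε < 3 ^ k * (2 - Z m) := by
        rw [div_lt_iff₀ hpos] at hk; linarith
      obtain ⟨ha, hb⟩ := grow k
      linarith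
    rcases hreg2 0 with h0 | h0 | h0
    · -- near -2
      show False
      rcases eq_or_lt_of_le hz1 with heq | hlt
      · -- z0 = -2 : w 1 = -4 t, too big
        have hw1 : W 1 = t * (z0 + 1) * (2 - z0) := by
          have := hWsucc 0
          simpa [hW, hZ, jonssonW, jonssonZ] using this
        rw [← heq] at hw1
        have : W 1 = -4 * t := by rw [hw1]; ring
        have hb := hcon 1
        rw [this, abs_of_nonpos (by nlinarith)] at hb
        nlinarith
      · -- -2 < z0 : Z 1 lands in B₂, strictly below 2
        have hz0 : Z 0 = z0 := rfl
        have hZ1 : Z 1 = z0 ^ 2 - 2 := by rw [hZsucc 0, hz0]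
        have h2Z1 : 2 - Z 1 = (2 - z0) * (2 + z0) := by rw [hZ1]; ring
        have hZ1lt : Z 1 < 2 := by nlinarith
        have hZ1up : 2 - Z 1 ≤ 4 * ε := by
          rw [h2Z1]; rw [hz0] at h0; nlinarith
        have hin : 2 - ε ≤ Z 1 := by
          rcases hreg2 1 with h' | h' | h'
          · linarith
          · have := (abs_le.mp h').2; linarith
          · exact h'
        exact hB2 1 hin (ne_of_lt hZ1lt)
    · -- near -1: expansion at the fixed point -1
      have hz0 : Z 0 = z0 := rfl
      have hne : z0 + 1 ≠ 0 := fun h => hne1 (by linarith [h] <;> linarith)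
      have habs : 0 < |z0 + 1| := abs_pos.mpr hne
      have grow : ∀ k, |Z k + 1| ≤ ε ∧ (19/10) ^ k * |z0 + 1| ≤ |Z k + 1| := by
        intro k
        induction k with
        | zero => rw [hz0]; simpa [hz0] using h0
        | succ k ih =>
          obtain ⟨ha, hb⟩ := ih
          have hZk := hZmem k
          have haup : Z k ≤ -1 + ε := by have := (abs_le.mp ha).2; linarith
          have halo : -1 - ε ≤ Z k := by have := (abs_le.mp ha).1; linarith
          have hfact : Z (k+1) + 1 = (Z k + 1) * (Z k - 1) := by
            rw [hZsucc k]; ring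
          have habs2 : |Z (k+1) + 1| = |Z k + 1| * (1 - Z k) := by
            rw [hfact, abs_mul, abs_of_neg (by linarith : Z k - 1 < 0)]
            ring_nf
          have hlow : (19/10) * |Z k + 1| ≤ |Z (k+1) + 1| := by
            rw [habs2]
            have h19 : (19/10:ℝ) ≤ 1 - Z k := by linarith
            nlinarith [abs_nonneg (Z k + 1)]
          have hup : |Z (k+1) + 1| ≤ 3 * ε := by
            rw [habs2]
            have : 1 - Z k ≤ 3 := by linarith
            nlinarith [abs_nonneg (Z k + 1)]
          have hin : |Z (k+1) + 1| ≤ ε := by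
            rcases hreg2 (k+1) with h' | h' | h'
            · have h1 : Z (k+1) + 1 ≤ -1 + ε := by linarith
              have h2 : -(Z (k+1) + 1) ≤ |Z (k+1) + 1| := neg_le_abs _
              linarith
            · exact h'
            · have h1 : 3 - ε ≤ Z (k+1) + 1 := by linarith
              have h2 : Z (k+1) + 1 ≤ |Z (k+1) + 1| := le_abs_self _
              linarith
          refine ⟨hin, ?_⟩
          calc (19/10) ^ (k+1) * |z0 + 1| = (19/10) * ((19/10) ^ k * |z0 + 1|) := by ring
            _ ≤ (19/10) * |Z k + 1| := by nlinarith
            _ ≤ |Z (k+1) + 1| := hlow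
      obtain ⟨k, hk⟩ := pow_unbounded_of_one_lt (ε / |z0 + 1|) (by norm_num : (1:ℝ) < 19/10)
      have h1 : ε < (19/10) ^ k * |z0 + 1| := by
        rw [div_lt_iff₀ habs] at hk; linarith
      obtain ⟨ha, hb⟩ := grow k
      linarith
    · exact hB2 0 h0 (by rw [show Z 0 = z0 from rfl]; exact hne2)
  -- Step 2: once big, doubling growth
  obtain ⟨N, hN⟩ := hbig
  refine ⟨N, ?_⟩
  intro k
  induction k with
  | zero => simpa using hN.le
  | succ k ih =>
    have h2k : (1:ℝ) ≤ 2 ^ k := one_le_pow₀ (by norm_num)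
    have hc4 : -4 ≤ (Z (N+k) + 1) * (2 - Z (N+k)) ∧ (Z (N+k) + 1) * (2 - Z (N+k)) ≤ 4 := by
      obtain ⟨a, b⟩ := hZmem (N+k)
      constructor
      · nlinarith [mul_nonneg (by linarith : (0:ℝ) ≤ 3 + Z (N+k)) (by linarith : (0:ℝ) ≤ 2 - Z (N+k))]
      · nlinarith [sq_nonneg (Z (N+k) - 1/2)]
    have hsq : (3 * s * 2 ^ k) ^ 2 ≤ (W (N+k)) ^ 2 := by
      rw [← sq_abs (W (N+k))]
      have h0 : 0 ≤ 3 * s * 2 ^ k := by positivity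
      nlinarith [ih, abs_nonneg (W (N+k))]
    have hkey : 3 * s * 2 ^ (k+1) ≤ (W (N+k)) ^ 2 - 4 * t := by
      have hexp : (3 * s * 2 ^ k) ^ 2 = 9 * s^2 * (2^k)^2 := by ring
      rw [← hs2]
      have h4 : 9 * s^2 * (2^k)^2 - 4 * s^2 ≥ 3 * s * 2^(k+1) := by
        have hP0 : (0:ℝ) < 2^k := pow_pos (by norm_num) k
        have hP1 : (1:ℝ) ≤ (2^k)^2 := by nlinarith
        have ha1 : 4*s^2 ≤ 4*s^2*(2^k)^2 := by
          nlinarith [mul_le_mul_of_nonneg_left hP1 (by positivity : (0:ℝ) ≤ 4*s^2)]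
        have ha3 : (300:ℝ) ≤ s*2^k := by nlinarith [mul_le_mul_of_nonneg_left h2k (le_of_lt hspos)]
        have ha2 : 6*(s*2^k) ≤ 5*(s*2^k)*(s*2^k) := by nlinarith [mul_pos hspos hP0]
        have h2k2 : (2:ℝ)^(k+1) = 2 * 2^k := by ring
        nlinarith
      nlinarith
    have hWv : W (N+k+1) = (W (N+k)) ^ 2 + t * ((Z (N+k) + 1) * (2 - Z (N+k))) := by
      rw [hWsucc (N+k)]; ring
    have hge : 3 * s * 2 ^ (k+1) ≤ W (N+k+1) := by
      rw [hWv]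
      nlinarith [hc4.1]
    have : W (N+k+1) ≤ |W (N+k+1)| := le_abs_self _
    show 3 * s * 2 ^ (k+1) ≤ |W (N + (k+1))|
    have hidx : N + (k+1) = N + k + 1 := by ring
    rw [hidx]
    linarith

set_option maxHeartbeats 1000000 in
theorem jonsson_example_critical_orbits :
    ∃ t₀ : ℝ, 0 < t₀ ∧ ∀ t : ℝ, t₀ ≤ t →
      ((fun q : ℂ × ℂ =>
          (q.1 ^ 2 - 2, q.2 ^ 2 + (t : ℂ) * (q.1 + 1) * (2 - q.1))) (-1, 0) = (-1, 0)) ∧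
      ((fun q : ℂ × ℂ =>
          (q.1 ^ 2 - 2, q.2 ^ 2 + (t : ℂ) * (q.1 + 1) * (2 - q.1))) (2, 0) = (2, 0)) ∧
      ∀ z : ℝ, z ∈ Set.Icc (-2 : ℝ) 2 → z ≠ -1 → z ≠ 2 →
        Filter.Tendsto (fun n =>
          ‖(fun q : ℂ × ℂ =>
              (q.1 ^ 2 - 2, q.2 ^ 2 + (t : ℂ) * (q.1 + 1) * (2 - q.1)))^[n]
              ((z : ℂ), 0)‖) Filter.atTop Filter.atTop := by
  refine ⟨90000, by norm_num, fun t ht => ⟨?_, ?_, ?_⟩⟩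
  · show ((-1:ℂ) ^ 2 - 2, (0:ℂ) ^ 2 + (t:ℂ) * (-1 + 1) * (2 - -1)) = (-1, 0)
    norm_num
  · show ((2:ℂ) ^ 2 - 2, (0:ℂ) ^ 2 + (t:ℂ) * (2 + 1) * (2 - 2)) = (2, 0)
    norm_num
  · intro z hz hne1 hne2
    obtain ⟨hz1, hz2⟩ := hz
    have hne1' : z ≠ -1 := hne1
    have hzc : (z:ℂ) ≠ -1 := by
      intro h; apply hne1; exact_mod_cast h
    -- correspondence between complex iterates and real sequences
    have hiter : ∀ n, (fun q : ℂ × ℂ =>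
        (q.1 ^ 2 - 2, q.2 ^ 2 + (t : ℂ) * (q.1 + 1) * (2 - q.1)))^[n] ((z:ℂ), 0)
        = (((jonssonZ z n : ℝ) : ℂ), ((jonssonW t z n : ℝ) : ℂ)) := by
      intro n
      induction n with
      | zero => simp [jonssonZ, jonssonW]
      | succ n ih =>
        rw [Function.iterate_succ_apply', ih]
        show ((jonssonZ z n : ℂ) ^ 2 - 2,
            (jonssonW t z n : ℂ) ^ 2 + (t:ℂ) * ((jonssonZ z n : ℂ) + 1) * (2 - (jonssonZ z n : ℂ)))
          = _
        have h1 : ((jonssonZ z (n+1) : ℝ) : ℂ) = (jonssonZ z n : ℂ) ^ 2 - 2 := by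
          show ((((jonssonZ z n) ^ 2 - 2 : ℝ)) : ℂ) = _
          push_cast; ring
        have h2 : ((jonssonW t z (n+1) : ℝ) : ℂ)
            = (jonssonW t z n : ℂ) ^ 2 + (t:ℂ) * ((jonssonZ z n : ℂ) + 1) * (2 - (jonssonZ z n : ℂ)) := by
          show ((((jonssonW t z n) ^ 2 + t * (jonssonZ z n + 1) * (2 - jonssonZ z n) : ℝ)) : ℂ) = _
          push_cast; ring
        rw [Prod.ext_iff]
        exact ⟨h1.symm, h2.symm⟩
    obtain ⟨N, hN⟩ := jonsson_escape t z ht hz1 hz2 hne1 hne2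
    have hs300 : 300 ≤ Real.sqrt t := by
      have : Real.sqrt 90000 ≤ Real.sqrt t := Real.sqrt_le_sqrt ht
      rwa [show (90000:ℝ) = 300^2 by norm_num, Real.sqrt_sq (by norm_num)] at this
    rw [tendsto_atTop_atTop]
    intro b
    obtain ⟨K, hK⟩ := pow_unbounded_of_one_lt b (by norm_num : (1:ℝ) < 2)
    refine ⟨N + K, fun a ha => ?_⟩
    have hKa : K ≤ a - N := by omega
    have hidx : a = N + (a - N) := by omega
    have h1 : 3 * Real.sqrt t * 2 ^ (a - N) ≤ |jonssonW t z a| := by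
      have := hN (a - N)
      rwa [← hidx] at this
    have h2 : (2:ℝ) ^ K ≤ 2 ^ (a - N) := pow_le_pow_right₀ (by norm_num) hKa
    have h3 : (2:ℝ) ^ (a-N) ≤ 3 * Real.sqrt t * 2 ^ (a - N) := by
      nlinarith [pow_pos (by norm_num : (0:ℝ) < 2) (a - N)]
    have h4 : b ≤ |jonssonW t z a| := by linarith
    have h5 : |jonssonW t z a|
        ≤ ‖(fun q : ℂ × ℂ =>
            (q.1 ^ 2 - 2, q.2 ^ 2 + (t : ℂ) * (q.1 + 1) * (2 - q.1)))^[a] ((z : ℂ), 0)‖ := by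
      rw [hiter a]
      have := norm_snd_le (((jonssonZ z a : ℝ) : ℂ), ((jonssonW t z a : ℝ) : ℂ))
      simpa [Complex.norm_real] using this
    linarith
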